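/- Let m ≥ 2 and let k, r be integers with 1 ≤ k and r ≥ 2k−1. Then the number of paths of length t = 2k−1 in the perfect rooted m-ary tree of depth r equals m^(2k−2) · ( (m^(r−k+2) − 1)/(m−1) − k ). -/

import Mathlib

open SimpleGraph Finset

/-- `IsPerfectRootedMary m r H ρ` says that `H` is the perfect rooted `m`-ary tree of
depth `r` with root `ρ`: a tree whose root `ρ` has degree `m`, in which every other
vertex has degree `1` or `m + 1`, whose maximum distance from `ρ` to a vertex is `r`,
and in which every degree-`1` vertex is at distance exactly `r` from `ρ`.
(For `r = 0` the root-degree condition is dropped, so that the one-vertex tree is the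
perfect rooted tree of depth `0`.) -/
def IsPerfectRootedMary (m r : ℕ) {W : Type} [Fintype W] (H : SimpleGraph W)
    [DecidableRel H.Adj] (ρ : W) : Prop :=
  H.IsTree ∧
    (0 < r → H.degree ρ = m) ∧
    (∀ v : W, v ≠ ρ → H.degree v = 1 ∨ H.degree v = m + 1) ∧
    (∀ v : W, H.dist ρ v ≤ r) ∧
    (∃ v : W, H.dist ρ v = r) ∧
    (∀ v : W, H.degree v = 1 → H.dist ρ v = r)

/-- The number of paths of length `t` in `H`, i.e. the number of unordered pairs of
vertices at distance exactly `t` from each other. -/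
noncomputable def pathCount {W : Type} [Fintype W] [DecidableEq W] (H : SimpleGraph W) (t : ℕ) : ℕ :=
  (Finset.univ.filter fun p : Sym2 W => ∃ u v : W, p = s(u, v) ∧ H.dist u v = t).card

section Aux
open scoped Classical
set_option linter.unusedSectionVars false
set_option maxHeartbeats 1000000
variable {W : Type} [Fintype W] [DecidableEq W] {G : SimpleGraph W} {ρ : W}

lemma tree_path_length (hT : G.IsTree) {u v : W} (p : G.Walk u v) (hp : p.IsPath) :
    p.length = G.dist u v := by
  obtain ⟨q, hq, hql⟩ := hT.isConnected.exists_path_of_dist u v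
  rw [(hT.existsUnique_path u v).unique hp hq, hql]

lemma adj_dist_cases (hT : G.IsTree) {u v : W} (h : G.Adj u v) :
    G.dist ρ v = G.dist ρ u + 1 ∨ G.dist ρ u = G.dist ρ v + 1 := by
  obtain ⟨p, hp, hpl⟩ := hT.isConnected.exists_path_of_dist ρ u
  by_cases hv : v ∈ p.support
  · right
    have h1 : (p.takeUntil v hv).length = G.dist ρ v :=
      tree_path_length hT _ (hp.takeUntil hv)
    have h2 : (p.dropUntil v hv).length = G.dist v u :=
      tree_path_length hT _ (hp.dropUntil hv)
    have h3 : G.dist v u = 1 := by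
      rw [SimpleGraph.dist_comm, dist_eq_one_iff_adj]; exact h
    have h4 : (p.takeUntil v hv).length + (p.dropUntil v hv).length = p.length := by
      rw [← Walk.length_append, Walk.take_spec]
    omega
  · left
    have hp' : (p.concat h).IsPath := by
      rw [Walk.isPath_def, Walk.support_concat]
      exact List.Nodup.append (Walk.isPath_def _ |>.mp hp) (List.nodup_singleton v)
        (by simpa using hv)
    have := tree_path_length hT _ hp' (u := ρ) (v := v)
    rw [Walk.length_concat] at this
    omega

lemma eq_root_of_dist_zero (hT : G.IsTree) {v : W} (h : G.dist ρ v = 0) : v = ρ :=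
  ((hT.isConnected.dist_eq_zero_iff).mp h).symm

lemma exists_parent (hT : G.IsTree) {v : W} (hv : v ≠ ρ) :
    ∃ u, G.Adj v u ∧ G.dist ρ u + 1 = G.dist ρ v := by
  obtain ⟨p, hp, hpl⟩ := hT.isConnected.exists_path_of_dist ρ v
  have hd : 0 < G.dist ρ v := by
    rcases Nat.eq_zero_or_pos (G.dist ρ v) with h | h
    · exact absurd (eq_root_of_dist_zero hT h) hv
    · exact h
  cases hpr : p.reverse with
  | nil => exact absurd rfl hv
  | cons hadj q =>
    rename_i x
    have hpe : p = (q.reverse).concat hadj.symm := by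
      rw [← Walk.reverse_reverse p, hpr, Walk.reverse_cons, Walk.concat_eq_append]
    have hxl : q.reverse.length = G.dist ρ v - 1 := by
      have := congrArg Walk.length hpe
      rw [Walk.length_concat] at this
      simp only [Walk.length_reverse] at *
      omega
    have hdx : G.dist ρ x ≤ G.dist ρ v - 1 := hxl ▸ dist_le q.reverse
    have hge : G.dist ρ v ≤ G.dist ρ x + 1 := by
      calc G.dist ρ v ≤ G.dist ρ x + G.dist x v := hT.isConnected.dist_triangle
        _ ≤ G.dist ρ x + 1 := by
            have : G.dist x v = 1 := by
              rw [SimpleGraph.dist_comm, dist_eq_one_iff_adj]; exact hadj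
            omega
    exact ⟨x, hadj, by omega⟩

lemma mem_support_dist_le (hT : G.IsTree) {u v w : W} (p : G.Walk u v) (hp : p.IsPath)
    (hw : w ∈ p.support) : G.dist u w ≤ p.length := by
  have := tree_path_length hT _ (hp.takeUntil hw)
  have := Walk.length_takeUntil_le p hw
  omega

lemma parent_unique (hT : G.IsTree) {v u₁ u₂ : W}
    (h₁ : G.Adj v u₁) (hd₁ : G.dist ρ u₁ + 1 = G.dist ρ v)
    (h₂ : G.Adj v u₂) (hd₂ : G.dist ρ u₂ + 1 = G.dist ρ v) : u₁ = u₂ := by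
  have key : ∀ (u : W) (h : G.Adj v u), G.dist ρ u + 1 = G.dist ρ v →
      ∃ (p : G.Walk ρ u) (hp : p.IsPath), (p.concat h.symm).IsPath ∧
        (p.concat h.symm).length = G.dist ρ v := by
    intro u h hd
    obtain ⟨p, hp, hpl⟩ := hT.isConnected.exists_path_of_dist ρ u
    have hvp : v ∉ p.support := by
      intro hmem
      have := mem_support_dist_le hT p hp hmem
      omega
    refine ⟨p, hp, ?_, ?_⟩
    · rw [Walk.isPath_def, Walk.support_concat]
      exact List.Nodup.append (Walk.isPath_def _ |>.mp hp) (List.nodup_singleton v)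
        (by simpa using hvp)
    · rw [Walk.length_concat]; omega
  obtain ⟨p₁, hp₁, hq₁, hl₁⟩ := key u₁ h₁ hd₁
  obtain ⟨p₂, hp₂, hq₂, hl₂⟩ := key u₂ h₂ hd₂
  have := (hT.existsUnique_path ρ v).unique hq₁ hq₂
  obtain ⟨hv, -⟩ := Walk.concat_inj this
  exact hv

/-- parent -/
noncomputable def par (G : SimpleGraph W) (ρ v : W) : W :=
  if h : ∃ u, G.Adj v u ∧ G.dist ρ u + 1 = G.dist ρ v then h.choose else ρ

variable {G : SimpleGraph W} {ρ : W}

lemma par_root : par G ρ ρ = ρ := by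
  rw [par, dif_neg]
  rintro ⟨u, -, hu⟩
  rw [SimpleGraph.dist_self] at hu
  omega

lemma par_spec (hT : G.IsTree) {v : W} (hv : v ≠ ρ) :
    G.Adj v (par G ρ v) ∧ G.dist ρ (par G ρ v) + 1 = G.dist ρ v := by
  have h := exists_parent hT hv
  rw [par, dif_pos h]
  exact h.choose_spec

lemma par_adj (hT : G.IsTree) {v : W} (hv : v ≠ ρ) : G.Adj v (par G ρ v) :=
  (par_spec hT hv).1

lemma par_dist (hT : G.IsTree) {v : W} (hv : v ≠ ρ) :
    G.dist ρ (par G ρ v) + 1 = G.dist ρ v := (par_spec hT hv).2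

lemma par_eq_of (hT : G.IsTree) {v u : W} (h : G.Adj v u)
    (hd : G.dist ρ u + 1 = G.dist ρ v) : par G ρ v = u := by
  have hv : v ≠ ρ := by
    intro hv
    rw [hv, SimpleGraph.dist_self] at hd
    omega
  exact parent_unique hT (par_adj hT hv) (par_dist hT hv) h hd

lemma child_par (hT : G.IsTree) {v u : W} (h : G.Adj v u)
    (hd : G.dist ρ u = G.dist ρ v + 1) : par G ρ u = v :=
  par_eq_of hT h.symm (by omega)

/-- j-fold ancestor -/
noncomputable def anc (G : SimpleGraph W) (ρ v : W) : ℕ → W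
  | 0 => v
  | j + 1 => par G ρ (anc G ρ v j)

@[simp] lemma anc_zero (v : W) : anc G ρ v 0 = v := rfl
lemma anc_succ (v : W) (j : ℕ) : anc G ρ v (j + 1) = par G ρ (anc G ρ v j) := rfl

lemma anc_root (j : ℕ) : anc G ρ ρ j = ρ := by
  induction j with
  | zero => rfl
  | succ j ih => rw [anc_succ, ih, par_root]

lemma anc_dist (hT : G.IsTree) (v : W) (j : ℕ) :
    G.dist ρ (anc G ρ v j) = G.dist ρ v - j := by
  induction j with
  | zero => simp
  | succ j ih =>
    rw [anc_succ]
    by_cases h : anc G ρ v j = ρ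
    · rw [h] at ih
      rw [h, par_root]
      rw [SimpleGraph.dist_self] at ih ⊢
      omega
    · have := par_dist hT h
      omega

lemma anc_add (v : W) (i j : ℕ) : anc G ρ v (i + j) = anc G ρ (anc G ρ v i) j := by
  induction j with
  | zero => rfl
  | succ j ih => rw [← Nat.add_assoc, anc_succ, ih, anc_succ]

lemma anc_eq_root (hT : G.IsTree) {v : W} {j : ℕ} (h : G.dist ρ v ≤ j) :
    anc G ρ v j = ρ := by
  apply eq_root_of_dist_zero hT
  rw [anc_dist hT]
  omega

lemma anc_ne_root_dist (hT : G.IsTree) {v : W} {j : ℕ} (h : j < G.dist ρ v) :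
    anc G ρ v j ≠ ρ := by
  intro heq
  have h2 := anc_dist hT (ρ := ρ) v j
  rw [heq, SimpleGraph.dist_self] at h2
  omega

lemma dist_anc (hT : G.IsTree) {v : W} {j : ℕ} (h : j ≤ G.dist ρ v) :
    G.dist v (anc G ρ v j) = j := by
  have hle : G.dist v (anc G ρ v j) ≤ j := by
    clear h
    induction j with
    | zero => simp
    | succ j ih =>
      by_cases hr : anc G ρ v j = ρ
      · rw [anc_succ, hr, par_root, ← hr]; omega
      · calc G.dist v (anc G ρ v (j+1)) ≤
            G.dist v (anc G ρ v j) + G.dist (anc G ρ v j) (anc G ρ v (j+1)) :=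
              hT.isConnected.dist_triangle
          _ ≤ j + 1 := by
              have : G.dist (anc G ρ v j) (anc G ρ v (j+1)) = 1 := by
                rw [dist_eq_one_iff_adj, anc_succ]
                exact par_adj hT hr
              omega
  have hge : G.dist ρ v ≤ G.dist ρ (anc G ρ v j) + G.dist (anc G ρ v j) v :=
    hT.isConnected.dist_triangle
  rw [anc_dist hT] at hge
  have hcomm : G.dist (anc G ρ v j) v = G.dist v (anc G ρ v j) :=
    SimpleGraph.dist_comm
  omega

lemma anc_child (hT : G.IsTree) {v u : W} (h : G.Adj v u)
    (hd : G.dist ρ u = G.dist ρ v + 1) (j : ℕ) :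
    anc G ρ u (j + 1) = anc G ρ v j := by
  rw [Nat.add_comm, anc_add]
  have : anc G ρ u 1 = v := by rw [anc_succ, anc_zero, child_par hT h hd]
  rw [this]

/-- if some ancestor of y is v, and x is connected to y avoiding v, then v is an
ancestor of x too -/
lemma anc_closure (hT : G.IsTree) {v : W} :
    ∀ {x y : W} (q : G.Walk x y), v ∉ q.support → (∃ j, anc G ρ y j = v) →
      ∃ j, anc G ρ x j = v := by
  intro x y q
  induction q with
  | nil => exact fun _ h => h
  | cons hadj q ih =>
    rename_i a b c
    intro hv hy
    have hvb : v ∉ q.support := fun h => hv (List.mem_cons_of_mem _ h)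
    obtain ⟨j, hj⟩ := ih hvb hy
    rcases adj_dist_cases (ρ := ρ) hT hadj with hcase | hcase
    · -- b is a child of a : par b = a
      cases j with
      | zero =>
        exfalso
        exact hv (by rw [← hj, anc_zero, Walk.support_cons]; exact List.mem_cons_of_mem _ q.start_mem_support)
      | succ j' =>
        exact ⟨j', by rw [← anc_child hT hadj hcase j', hj]⟩
    · -- a is a child of b
      exact ⟨j + 1, by rw [anc_child hT hadj.symm hcase j, hj]⟩

lemma claimA (hT : G.IsTree) {u v : W} (hnd : ∀ j, anc G ρ u j ≠ v) :
    G.dist u v = G.dist u (par G ρ v) + 1 := by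
  have hne : u ≠ v := fun h => hnd 0 (by rw [anc_zero, h])
  obtain ⟨p, hp, hpl⟩ := hT.isConnected.exists_path_of_dist u v
  have hd : 0 < p.length := by
    rcases Nat.eq_zero_or_pos p.length with h | h
    · exact absurd (Walk.eq_of_length_eq_zero h) hne
    · exact h
  cases hpr : p.reverse with
  | nil => exact absurd rfl hne.symm
  | cons hadj q =>
    rename_i x
    -- p = q.reverse.concat hadj.symm,  hadj : G.Adj v x
    have hpe : p = (q.reverse).concat hadj.symm := by
      rw [← Walk.reverse_reverse p, hpr, Walk.reverse_cons, Walk.concat_eq_append]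
    have hq : (q.reverse).IsPath := by
      rw [hpe, Walk.concat_eq_append] at hp
      exact hp.of_append_left
    have hvq : v ∉ (q.reverse).support := by
      rw [hpe] at hp
      rw [Walk.isPath_def, Walk.support_concat] at hp
      have := List.disjoint_of_nodup_append hp
      exact fun hmem => this hmem (List.mem_singleton_self v)
    have hql : (q.reverse).length = G.dist u x := tree_path_length hT _ hq
    have hlen : p.length = (q.reverse).length + 1 := by rw [hpe, Walk.length_concat]
    rcases adj_dist_cases (ρ := ρ) hT hadj with hcase | hcase
    · -- x is a child of v: contradiction via anc_closure
      exfalso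
      have hanc : ∃ j, anc G ρ x j = v := ⟨1, by
        rw [anc_succ, anc_zero, child_par hT hadj hcase]⟩
      obtain ⟨j, hj⟩ := anc_closure hT (q.reverse) hvq hanc
      exact hnd j hj
    · -- x is the parent of v
      have hx : par G ρ v = x := par_eq_of hT hadj (by omega)
      rw [hx, ← hql, ← hpl]
      omega

/-- depth of the deepest common ancestor -/
noncomputable def md (G : SimpleGraph W) (ρ u v : W) : ℕ :=
  Nat.findGreatest
    (fun c => anc G ρ u (G.dist ρ u - c) = anc G ρ v (G.dist ρ v - c))
    (min (G.dist ρ u) (G.dist ρ v))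

lemma md_le {u v : W} : md G ρ u v ≤ min (G.dist ρ u) (G.dist ρ v) :=
  Nat.findGreatest_le _

lemma md_spec (hT : G.IsTree) (u v : W) :
    anc G ρ u (G.dist ρ u - md G ρ u v) = anc G ρ v (G.dist ρ v - md G ρ u v) := by
  have h0 : anc G ρ u (G.dist ρ u - 0) = anc G ρ v (G.dist ρ v - 0) := by
    rw [Nat.sub_zero, Nat.sub_zero, anc_eq_root hT le_rfl, anc_eq_root hT le_rfl]
  exact Nat.findGreatest_spec
    (P := fun c => anc G ρ u (G.dist ρ u - c) = anc G ρ v (G.dist ρ v - c))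
    (Nat.zero_le _) h0

lemma md_greatest {u v : W} {c : ℕ} (h1 : md G ρ u v < c)
    (h2 : c ≤ min (G.dist ρ u) (G.dist ρ v)) :
    anc G ρ u (G.dist ρ u - c) ≠ anc G ρ v (G.dist ρ v - c) :=
  Nat.findGreatest_is_greatest h1 h2

lemma md_ge {u v : W} {c : ℕ} (h2 : c ≤ min (G.dist ρ u) (G.dist ρ v))
    (h : anc G ρ u (G.dist ρ u - c) = anc G ρ v (G.dist ρ v - c)) :
    c ≤ md G ρ u v :=
  Nat.le_findGreatest h2 h

/-- the key distance formula -/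
lemma dist_eq_md (hT : G.IsTree) (u v : W) :
    G.dist u v = (G.dist ρ u - md G ρ u v) + (G.dist ρ v - md G ρ u v) := by
  set n := G.dist ρ u + G.dist ρ v with hn
  clear_value n
  induction n using Nat.strong_induction_on generalizing u v with
  | _ n ih =>
  set c := md G ρ u v with hc
  have hcle := md_le (G := G) (ρ := ρ) (u := u) (v := v)
  have hspec := md_spec (ρ := ρ) hT u v
  rw [← hc] at hspec
  by_cases hcv : c = G.dist ρ v
  · -- v is an ancestor of u
    rw [hcv, Nat.sub_self, anc_zero] at hspec
    have h1 : G.dist u (anc G ρ u (G.dist ρ u - G.dist ρ v)) =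
        G.dist ρ u - G.dist ρ v := dist_anc hT (by omega)
    rw [hspec] at h1
    omega
  by_cases hcu : c = G.dist ρ u
  · -- u is an ancestor of v
    rw [hcu] at hspec
    rw [Nat.sub_self, anc_zero] at hspec
    have h1 : G.dist v (anc G ρ v (G.dist ρ v - G.dist ρ u)) =
        G.dist ρ v - G.dist ρ u := dist_anc hT (by omega)
    rw [← hspec] at h1
    have h2 : G.dist u v = G.dist v u := SimpleGraph.dist_comm
    omega
  · have hclt : c < G.dist ρ u ∧ c < G.dist ρ v := by omega
    have hvne : v ≠ ρ := by
      intro h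
      rw [h, SimpleGraph.dist_self] at hclt
      omega
    -- v is not an ancestor of u
    have hnd : ∀ j, anc G ρ u j ≠ v := by
      intro j hj
      have hdj := anc_dist hT (ρ := ρ) u j
      rw [hj] at hdj
      have hjle : j ≤ G.dist ρ u := by
        by_contra hgt
        push_neg at hgt
        rw [anc_eq_root hT (by omega)] at hj
        exact hvne hj.symm
      have : c ≥ G.dist ρ v := by
        rw [hc]
        apply md_ge (by omega)
        have hsub : G.dist ρ u - G.dist ρ v = j := by omega
        rw [Nat.sub_self, anc_zero, hsub, hj]
      omega
    have hA := claimA (ρ := ρ) hT hnd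
    set v' := par G ρ v with hv'
    have hv'd : G.dist ρ v' + 1 = G.dist ρ v := par_dist hT hvne
    -- md u v' = c
    have hanc' : ∀ c' ≤ G.dist ρ v - 1,
        anc G ρ v' (G.dist ρ v' - c') = anc G ρ v (G.dist ρ v - c') := by
      intro c' hc'
      have h1 : G.dist ρ v - c' = 1 + (G.dist ρ v' - c') := by omega
      rw [h1, anc_add]
      congr 1
    have hmd' : md G ρ u v' = c := by
      apply le_antisymm
      · by_contra hgt
        push_neg at hgt
        have hle' := md_le (G := G) (ρ := ρ) (u := u) (v := v')
        set c' := md G ρ u v' with hc'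
        have hsp' := md_spec (ρ := ρ) hT u v'
        rw [hanc' c' (by omega)] at hsp'
        exact md_greatest (by omega) (by omega) hsp'
      · apply md_ge (by omega)
        rw [hanc' c (by omega)]
        exact hspec
    have hih := ih (G.dist ρ u + G.dist ρ v') (by omega) u v' rfl
    rw [hmd'] at hih
    rw [hA, hih]
    omega

lemma walk_parity (hT : G.IsTree) {x y : W} (p : G.Walk x y) :
    (G.dist ρ x + p.length) % 2 = G.dist ρ y % 2 := by
  induction p with
  | nil => rfl
  | cons hadj q ih =>
    rename_i a b c
    rcases adj_dist_cases (ρ := ρ) hT hadj with h | h <;>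
      · rw [Walk.length_cons]
        omega

lemma dist_parity (hT : G.IsTree) (u v : W) :
    (G.dist ρ u + G.dist ρ v + G.dist u v) % 2 = 0 := by
  obtain ⟨p, hp, hpl⟩ := hT.isConnected.exists_path_of_dist u v
  have := walk_parity (ρ := ρ) hT p
  rw [hpl] at this
  omega

section WithAdj
variable [DecidableRel G.Adj]
noncomputable def children (G : SimpleGraph W) (ρ v : W) : Finset W :=
  univ.filter (fun u => G.Adj v u ∧ G.dist ρ u = G.dist ρ v + 1)

lemma mem_children {v u : W} :
    u ∈ children G ρ v ↔ G.Adj v u ∧ G.dist ρ u = G.dist ρ v + 1 := by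
  simp [children]

lemma children_disjoint (hT : G.IsTree) {v₁ v₂ : W} (h : v₁ ≠ v₂) :
    Disjoint (children G ρ v₁) (children G ρ v₂) := by
  rw [Finset.disjoint_left]
  intro u h1 h2
  rw [mem_children] at h1 h2
  exact h (by rw [← child_par hT h1.1 h1.2, ← child_par hT h2.1 h2.2])

lemma neighborFinset_eq_root (hT : G.IsTree) (hρ : True) :
    G.neighborFinset ρ = children G ρ ρ := by
  ext u
  rw [mem_neighborFinset, mem_children]
  constructor
  · intro h
    refine ⟨h, ?_⟩
    rcases adj_dist_cases (ρ := ρ) hT h with hc | hc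
    · rw [SimpleGraph.dist_self] at hc ⊢; omega
    · rw [SimpleGraph.dist_self] at hc; omega
  · exact fun h => h.1

lemma neighborFinset_eq (hT : G.IsTree) {v : W} (hv : v ≠ ρ) :
    G.neighborFinset v = insert (par G ρ v) (children G ρ v) := by
  ext u
  rw [mem_neighborFinset, Finset.mem_insert, mem_children]
  constructor
  · intro h
    rcases adj_dist_cases (ρ := ρ) hT h with hc | hc
    · exact Or.inr ⟨h, hc⟩
    · exact Or.inl (par_eq_of hT h (by omega)).symm
  · rintro (rfl | h)
    · exact par_adj hT hv
    · exact h.1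

lemma degree_eq_children_card_root (hT : G.IsTree) :
    G.degree ρ = (children G ρ ρ).card := by
  rw [← card_neighborFinset_eq_degree, neighborFinset_eq_root hT trivial]

lemma degree_eq_children_card (hT : G.IsTree) {v : W} (hv : v ≠ ρ) :
    G.degree v = (children G ρ v).card + 1 := by
  have hnm : par G ρ v ∉ children G ρ v := by
    intro hmem
    rw [mem_children] at hmem
    have := par_dist hT hv
    omega
  rw [← card_neighborFinset_eq_degree, neighborFinset_eq hT hv,
    Finset.card_insert_of_notMem hnm]

structure PT (G : SimpleGraph W) [DecidableRel G.Adj] (ρ : W) (m r : ℕ) : Prop where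
  hT : G.IsTree
  hroot : 0 < r → G.degree ρ = m
  hdeg : ∀ v : W, v ≠ ρ → G.degree v = 1 ∨ G.degree v = m + 1
  hle : ∀ v : W, G.dist ρ v ≤ r
  hleaf : ∀ v : W, G.degree v = 1 → G.dist ρ v = r

lemma children_card (hpt : PT G ρ m r) (hr : 0 < r) {v : W} (hv : G.dist ρ v < r) :
    (children G ρ v).card = m := by
  by_cases hvr : v = ρ
  · subst hvr
    rw [← degree_eq_children_card_root hpt.hT]
    exact hpt.hroot hr
  · rcases hpt.hdeg v hvr with h1 | h1
    · have := hpt.hleaf v h1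
      omega
    · have := degree_eq_children_card hpt.hT hvr
      omega

lemma children_eq_empty (hpt : PT G ρ m r) {v : W} (hv : G.dist ρ v = r) :
    children G ρ v = ∅ := by
  rw [Finset.eq_empty_iff_forall_notMem]
  intro u hu
  rw [mem_children] at hu
  have := hpt.hle u
  omega

noncomputable def level (G : SimpleGraph W) (ρ : W) (e : ℕ) : Finset W :=
  univ.filter (fun v => G.dist ρ v = e)

lemma mem_level {v : W} {e : ℕ} : v ∈ level G ρ e ↔ G.dist ρ v = e := by simp [level]

lemma level_zero (hT : G.IsTree) : level G ρ 0 = {ρ} := by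
  ext v
  rw [mem_level, Finset.mem_singleton]
  constructor
  · exact fun h => eq_root_of_dist_zero hT h
  · rintro rfl; exact SimpleGraph.dist_self

lemma level_succ (hT : G.IsTree) (e : ℕ) :
    level G ρ (e + 1) = (level G ρ e).biUnion (children G ρ) := by
  ext u
  rw [mem_level, Finset.mem_biUnion]
  constructor
  · intro h
    have hu : u ≠ ρ := by
      intro h2; rw [h2, SimpleGraph.dist_self] at h; omega
    refine ⟨par G ρ u, ?_, ?_⟩
    · rw [mem_level]
      have := par_dist hT hu
      omega
    · rw [mem_children]
      have := par_dist hT hu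
      exact ⟨(par_adj hT hu).symm, by omega⟩
  · rintro ⟨v, hv, hu⟩
    rw [mem_level] at hv
    rw [mem_children] at hu
    omega

lemma level_card (hpt : PT G ρ m r) (hr : 0 < r) {e : ℕ} (he : e ≤ r) :
    (level G ρ e).card = m ^ e := by
  induction e with
  | zero => rw [level_zero hpt.hT, Finset.card_singleton, pow_zero]
  | succ e ih =>
    rw [level_succ hpt.hT, Finset.card_biUnion
      (fun v₁ _ v₂ _ h => children_disjoint hpt.hT h)]
    rw [Finset.sum_congr rfl (fun v hv => children_card hpt hr
      (by rw [mem_level] at hv; omega))]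
    rw [Finset.sum_const, ih (by omega), smul_eq_mul, pow_succ]

noncomputable def dset (G : SimpleGraph W) (ρ w : W) (s : ℕ) : Finset W :=
  univ.filter (fun u => G.dist ρ u = G.dist ρ w + s ∧ anc G ρ u s = w)

lemma mem_dset {w u : W} {s : ℕ} :
    u ∈ dset G ρ w s ↔ G.dist ρ u = G.dist ρ w + s ∧ anc G ρ u s = w := by simp [dset]

lemma dset_zero (w : W) : dset G ρ w 0 = {w} := by
  ext u
  rw [mem_dset, Finset.mem_singleton, anc_zero]
  constructor
  · exact fun h => h.2
  · rintro rfl; exact ⟨by omega, rfl⟩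

lemma dset_succ (hT : G.IsTree) (w : W) (s : ℕ) :
    dset G ρ w (s + 1) = (dset G ρ w s).biUnion (children G ρ) := by
  ext u
  rw [mem_dset, Finset.mem_biUnion]
  constructor
  · rintro ⟨hd, ha⟩
    have hu : u ≠ ρ := by
      intro h2; rw [h2, SimpleGraph.dist_self] at hd; omega
    refine ⟨par G ρ u, ?_, ?_⟩
    · rw [mem_dset]
      have hpd := par_dist hT hu
      constructor
      · omega
      · have h1 : anc G ρ u (1 + s) = anc G ρ (anc G ρ u 1) s := anc_add u 1 s
        rw [Nat.add_comm] at h1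
        rw [← ha, h1, anc_succ, anc_zero]
    · rw [mem_children]
      have := par_dist hT hu
      exact ⟨(par_adj hT hu).symm, by omega⟩
  · rintro ⟨v, hv, hu⟩
    rw [mem_dset] at hv
    rw [mem_children] at hu
    refine ⟨by omega, ?_⟩
    have h1 : anc G ρ u (1 + s) = anc G ρ (anc G ρ u 1) s := anc_add u 1 s
    rw [Nat.add_comm] at h1
    rw [h1, anc_succ, anc_zero, child_par hT hu.1 hu.2, hv.2]

lemma dset_card (hpt : PT G ρ m r) (hr : 0 < r) {w : W} {s : ℕ}
    (h : G.dist ρ w + s ≤ r) : (dset G ρ w s).card = m ^ s := by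
  induction s with
  | zero => rw [dset_zero, Finset.card_singleton, pow_zero]
  | succ s ih =>
    rw [dset_succ hpt.hT, Finset.card_biUnion
      (fun v₁ _ v₂ _ hne => children_disjoint hpt.hT hne)]
    rw [Finset.sum_congr rfl (fun v hv => children_card hpt hr
      (by rw [mem_dset] at hv; omega))]
    rw [Finset.sum_const, ih (by omega), smul_eq_mul, pow_succ]

lemma dset_sub (hT : G.IsTree) {w w' : W} (hw' : w' ≠ ρ) (hp : par G ρ w' = w) (s : ℕ) :
    dset G ρ w' s ⊆ dset G ρ w (s + 1) := by
  intro u hu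
  rw [mem_dset] at hu ⊢
  have hpd := par_dist hT hw'
  rw [hp] at hpd
  refine ⟨by omega, ?_⟩
  rw [anc_succ, hu.2, hp]

/-- vertices at distance t from v that are closer to the root -/
noncomputable def nset (G : SimpleGraph W) (ρ v : W) (t : ℕ) : Finset W :=
  univ.filter (fun u => G.dist u v = t ∧ G.dist ρ u < G.dist ρ v)

lemma mem_nset {v u : W} {t : ℕ} :
    u ∈ nset G ρ v t ↔ G.dist u v = t ∧ G.dist ρ u < G.dist ρ v := by simp [nset]

/-- the piece of `nset` whose deepest common ancestor with v has depth `dist ρ v - j` -/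
noncomputable def uset (G : SimpleGraph W) (ρ v : W) (t j : ℕ) : Finset W :=
  dset G ρ (anc G ρ v j) (t - j) \ dset G ρ (anc G ρ v (j - 1)) (t - j - 1)

lemma uset_depth (hT : G.IsTree) {v u : W} {t j : ℕ} (hj : j ≤ G.dist ρ v) (hjt : j ≤ t)
    (h : u ∈ uset G ρ v t j) : G.dist ρ u + 2 * j = G.dist ρ v + t := by
  obtain ⟨h1, -⟩ := Finset.mem_sdiff.mp h
  rw [mem_dset] at h1
  have := anc_dist hT (ρ := ρ) v j
  omega

lemma nset_eq_biUnion {k t : ℕ} (hT : G.IsTree) (hk : 1 ≤ k) (ht : t = 2 * k - 1) (v : W) :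
    nset G ρ v t = (Icc k (min t (G.dist ρ v))).biUnion (uset G ρ v t) := by
  set e := G.dist ρ v with he
  ext u
  rw [mem_nset, Finset.mem_biUnion]
  constructor
  · rintro ⟨hdist, hlt⟩
    set c := md G ρ u v with hc
    have hcle := md_le (G := G) (ρ := ρ) (u := u) (v := v)
    have hkey := dist_eq_md (ρ := ρ) hT u v
    rw [hdist] at hkey
    set j := e - c with hj
    have hcj : c = e - j := by omega
    have hjle : j ≤ e := by omega
    have hjt : j ≤ t := by omega
    have hkj : k ≤ j := by omega
    have hdu : G.dist ρ u = c + (t - j) := by omega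
    refine ⟨j, Finset.mem_Icc.mpr ⟨hkj, by omega⟩, ?_⟩
    rw [uset, Finset.mem_sdiff]
    constructor
    · rw [mem_dset]
      have hancd : G.dist ρ (anc G ρ v j) = c := by
        have := anc_dist hT (ρ := ρ) v j; omega
      refine ⟨by omega, ?_⟩
      have hspec := md_spec (ρ := ρ) hT u v
      rw [← hc] at hspec
      have h1 : G.dist ρ u - c = t - j := by omega
      have h2 : G.dist ρ v - c = j := by omega
      rw [h1, h2] at hspec
      exact hspec
    · intro hmem
      rw [mem_dset] at hmem
      obtain ⟨hd2, ha2⟩ := hmem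
      by_cases hjt' : j = t
      · -- u = anc v t has depth e - t, but anc v (t-1) has depth e - t + 1
        have hd3 := anc_dist hT (ρ := ρ) v (j - 1)
        omega
      · have hgr := md_greatest (G := G) (ρ := ρ) (u := u) (v := v) (c := c + 1)
          (by omega) (by omega)
        have h1 : G.dist ρ u - (c + 1) = t - j - 1 := by omega
        have h2 : G.dist ρ v - (c + 1) = j - 1 := by omega
        rw [h1, h2] at hgr
        exact hgr ha2
  · rintro ⟨j, hjmem, hju⟩
    rw [Finset.mem_Icc, Nat.le_min] at hjmem
    obtain ⟨hkj, hjt, hjle⟩ := hjmem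
    set c := e - j with hc
    obtain ⟨h1, h2⟩ := Finset.mem_sdiff.mp hju
    rw [mem_dset] at h1
    have hancd : G.dist ρ (anc G ρ v j) = c := by
      have := anc_dist hT (ρ := ρ) v j; omega
    have hdu : G.dist ρ u = c + (t - j) := by omega
    have hlt : G.dist ρ u < e := by omega
    have hmdge : c ≤ md G ρ u v := by
      apply md_ge (by omega)
      have hh1 : G.dist ρ u - c = t - j := by omega
      have hh2 : G.dist ρ v - c = j := by omega
      rw [hh1, hh2]
      exact h1.2
    have hmdle : md G ρ u v ≤ c := by
      by_contra hgt
      push_neg at hgt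
      have hmle := md_le (G := G) (ρ := ρ) (u := u) (v := v)
      by_cases hjt' : j = t
      · omega
      · apply h2
        rw [mem_dset]
        have hd3 : G.dist ρ (anc G ρ v (j - 1)) = c + 1 := by
          have := anc_dist hT (ρ := ρ) v (j - 1); omega
        refine ⟨by omega, ?_⟩
        have hspec := md_spec (ρ := ρ) hT u v
        set c' := md G ρ u v with hc'
        have e1 : G.dist ρ u - (c + 1) = (G.dist ρ u - c') + (c' - (c + 1)) := by omega
        have e2 : G.dist ρ v - (c + 1) = (G.dist ρ v - c') + (c' - (c + 1)) := by omega
        have e3 : G.dist ρ u - (c + 1) = t - j - 1 := by omega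
        have e4 : G.dist ρ v - (c + 1) = j - 1 := by omega
        have : anc G ρ u (G.dist ρ u - (c+1)) = anc G ρ v (G.dist ρ v - (c+1)) := by
          rw [e1, e2, anc_add, anc_add, hspec]
        rw [e3, e4] at this
        exact this
    have hmd : md G ρ u v = c := le_antisymm hmdle hmdge
    have hkey := dist_eq_md (ρ := ρ) hT u v
    rw [hmd] at hkey
    refine ⟨by omega, hlt⟩

lemma uset_pairwise_disjoint {k t : ℕ} (hT : G.IsTree) (v : W) {j₁ j₂ : ℕ}
    (h₁ : j₁ ∈ Icc k (min t (G.dist ρ v))) (h₂ : j₂ ∈ Icc k (min t (G.dist ρ v)))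
    (hne : j₁ ≠ j₂) : Disjoint (uset G ρ v t j₁) (uset G ρ v t j₂) := by
  rw [Finset.mem_Icc, Nat.le_min] at h₁ h₂
  rw [Finset.disjoint_left]
  intro u hu1 hu2
  have d1 := uset_depth hT h₁.2.2 h₁.2.1 hu1
  have d2 := uset_depth hT h₂.2.2 h₂.2.1 hu2
  omega

lemma uset_card {m r k t : ℕ} (hpt : PT G ρ m r) (hr : 0 < r) (hk : 1 ≤ k)
    (ht : t = 2 * k - 1) (v : W) {j : ℕ} (hj : j ∈ Icc k (min t (G.dist ρ v))) :
    (uset G ρ v t j).card = if j = t then 1 else m ^ (t - j) - m ^ (t - j - 1) := by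
  rw [Finset.mem_Icc, Nat.le_min] at hj
  obtain ⟨hkj, hjt, hjle⟩ := hj
  set e := G.dist ρ v with he
  have her : e ≤ r := hpt.hle v
  have hda := anc_dist hpt.hT (ρ := ρ) v j
  have hda' := anc_dist hpt.hT (ρ := ρ) v (j - 1)
  by_cases hjt' : j = t
  · subst hjt'
    rw [if_pos rfl, uset]
    have h0' : j - j - 1 = 0 := by omega
    rw [h0']
    have h0 : j - j = 0 := by omega
    rw [h0, dset_zero, dset_zero]
    have hne : anc G ρ v j ≠ anc G ρ v (j - 1) := by
      intro h
      rw [← h] at hda'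
      omega
    rw [Finset.sdiff_eq_self_of_disjoint (by rw [Finset.disjoint_singleton]; exact hne), Finset.card_singleton]
  · rw [if_neg hjt', uset]
    have hw' : anc G ρ v (j - 1) ≠ ρ := by
      intro h
      have := anc_dist hpt.hT (ρ := ρ) v (j - 1)
      rw [h, SimpleGraph.dist_self] at this
      omega
    have hpar : par G ρ (anc G ρ v (j - 1)) = anc G ρ v j := by
      have : j - 1 + 1 = j := by omega
      rw [← anc_succ, this]
    have hsub : dset G ρ (anc G ρ v (j-1)) (t - j - 1) ⊆ dset G ρ (anc G ρ v j) (t - j) := by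
      have hs : t - j - 1 + 1 = t - j := by omega
      have := dset_sub hpt.hT hw' hpar (t - j - 1)
      rw [hs] at this
      exact this
    rw [Finset.card_sdiff_of_subset hsub, dset_card hpt hr (by omega), dset_card hpt hr (by omega)]

lemma nset_card {m r k t : ℕ} (hpt : PT G ρ m r) (hr : 0 < r) (hk : 1 ≤ k)
    (ht : t = 2 * k - 1) (v : W) :
    (nset G ρ v t).card =
      ∑ j ∈ Icc k (min t (G.dist ρ v)),
        (if j = t then 1 else m ^ (t - j) - m ^ (t - j - 1)) := by
  rw [nset_eq_biUnion hpt.hT hk ht v,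
    Finset.card_biUnion (fun j₁ h₁ j₂ h₂ hne => uset_pairwise_disjoint hpt.hT v h₁ h₂ hne)]
  exact Finset.sum_congr rfl (fun j hj => uset_card hpt hr hk ht v hj)

lemma pathCount_eq_sum_nset {k t : ℕ} (hT : G.IsTree) (hk : 1 ≤ k) (ht : t = 2 * k - 1) :
    pathCount G t = ∑ v : W, (nset G ρ v t).card := by
  rw [pathCount, ← Finset.card_sigma]
  symm
  apply Finset.card_bij (fun p _ => s(p.2, p.1))
  · rintro ⟨v, u⟩ hmem
    rw [Finset.mem_sigma] at hmem
    have hu := mem_nset.mp hmem.2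
    simp only [Finset.mem_filter, Finset.mem_univ, true_and]
    exact ⟨u, v, rfl, hu.1⟩
  · rintro ⟨v₁, u₁⟩ h₁ ⟨v₂, u₂⟩ h₂ heq
    rw [Finset.mem_sigma] at h₁ h₂
    have hu₁ := mem_nset.mp h₁.2
    have hu₂ := mem_nset.mp h₂.2
    rw [Sym2.eq_iff] at heq
    rcases heq with ⟨rfl, rfl⟩ | ⟨rfl, rfl⟩
    · rfl
    · dsimp only at hu₁ hu₂
      omega
  · intro q hq
    rw [Finset.mem_filter] at hq
    obtain ⟨-, u, v, rfl, hdist⟩ := hq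
    have hpar := dist_parity (ρ := ρ) hT u v
    have hodd : G.dist ρ u ≠ G.dist ρ v := by
      intro h
      rw [h, hdist] at hpar
      omega
    rcases Nat.lt_or_ge (G.dist ρ u) (G.dist ρ v) with hlt | hge
    · refine ⟨⟨v, u⟩, ?_, rfl⟩
      rw [Finset.mem_sigma]
      exact ⟨Finset.mem_univ v, mem_nset.mpr ⟨hdist, hlt⟩⟩
    · refine ⟨⟨u, v⟩, ?_, Sym2.eq_swap⟩
      rw [Finset.mem_sigma]
      refine ⟨Finset.mem_univ u, ?_⟩
      rw [mem_nset]
      dsimp only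
      exact ⟨by rw [SimpleGraph.dist_comm]; exact hdist, by omega⟩

lemma sum_levels {r : ℕ} (hle : ∀ v : W, G.dist ρ v ≤ r) (f : ℕ → ℕ) :
    ∑ v : W, f (G.dist ρ v) = ∑ e ∈ range (r + 1), (level G ρ e).card * f e := by
  have huniv : (Finset.univ : Finset W) = (range (r + 1)).biUnion (level G ρ) := by
    ext v
    simp only [Finset.mem_univ, true_iff, Finset.mem_biUnion, Finset.mem_range]
    exact ⟨G.dist ρ v, by have := hle v; omega, mem_level.mpr rfl⟩
  rw [show (∑ v : W, f (G.dist ρ v)) = ∑ v ∈ (Finset.univ : Finset W), f (G.dist ρ v) from rfl,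
    huniv, Finset.sum_biUnion]
  · apply Finset.sum_congr rfl
    intro e he
    rw [Finset.sum_congr rfl (fun v hv => by rw [mem_level.mp hv]), Finset.sum_const,
      smul_eq_mul]
  · intro e₁ h₁ e₂ h₂ hne
    rw [Function.onFun, Finset.disjoint_left]
    intro v hv1 hv2
    rw [mem_level] at hv1 hv2
    exact hne (by omega)

end WithAdj

lemma tele_q (m a : ℕ) : ∀ J, a ≤ J → J ≤ 2*a →
    ∑ j ∈ Icc (a+1) J, ((m:ℚ)^(2*a+1-j) - (m:ℚ)^(2*a+1-j-1)) =
      (m:ℚ)^a - (m:ℚ)^(2*a-J) := by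
  intro J hJ
  induction J, hJ using Nat.le_induction with
  | base =>
    intro _
    rw [Finset.Icc_eq_empty (by omega), Finset.sum_empty]
    have h1 : 2*a - a = a := by omega
    rw [h1]
    ring
  | succ J hJ ih =>
    intro hJ2
    rw [Finset.sum_Icc_succ_top (by omega), ih (by omega)]
    have h1 : 2*a+1-(J+1) = 2*a-J := by omega
    rw [h1]
    have h2 : 2*a-J-1 = 2*a-(J+1) := by omega
    rw [h2]
    ring

lemma ncast_q (m a : ℕ) (hm : 1 ≤ m) (e : ℕ) :
    ((∑ j ∈ Icc (a+1) (min (2*a+1) e),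
        (if j = 2*a+1 then 1 else m^(2*a+1-j) - m^(2*a+1-j-1)) : ℕ) : ℚ) =
      if 2*a+1 ≤ e then (m:ℚ)^a
      else if a+1 ≤ e then (m:ℚ)^a - (m:ℚ)^(2*a-e) else 0 := by
  by_cases h1 : 2*a+1 ≤ e
  · rw [if_pos h1]
    have hmin : min (2*a+1) e = 2*a+1 := by omega
    rw [hmin, Finset.sum_Icc_succ_top (by omega), if_pos rfl]
    have hsum : ∀ j ∈ Icc (a+1) (2*a), (if j = 2*a+1 then 1 else m^(2*a+1-j) - m^(2*a+1-j-1))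
        = m^(2*a+1-j) - m^(2*a+1-j-1) := by
      intro j hj
      rw [Finset.mem_Icc] at hj
      rw [if_neg (by omega)]
    rw [Finset.sum_congr rfl hsum, Nat.cast_add, Nat.cast_sum, Nat.cast_one]
    have hcast : ∀ j ∈ Icc (a+1) (2*a), ((m^(2*a+1-j) - m^(2*a+1-j-1) : ℕ) : ℚ)
        = (m:ℚ)^(2*a+1-j) - (m:ℚ)^(2*a+1-j-1) := by
      intro j hj
      rw [Finset.mem_Icc] at hj
      rw [Nat.cast_sub (Nat.pow_le_pow_right hm (by omega))]
      push_cast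
      ring
    rw [Finset.sum_congr rfl hcast, tele_q m a (2*a) (by omega) (by omega)]
    have : 2*a - 2*a = 0 := by omega
    rw [this]
    ring
  · rw [if_neg h1]
    have hmin : min (2*a+1) e = e := by omega
    rw [hmin]
    by_cases h2 : a+1 ≤ e
    · rw [if_pos h2]
      have hsum : ∀ j ∈ Icc (a+1) e, (if j = 2*a+1 then 1 else m^(2*a+1-j) - m^(2*a+1-j-1))
          = m^(2*a+1-j) - m^(2*a+1-j-1) := by
        intro j hj
        rw [Finset.mem_Icc] at hj
        rw [if_neg (by omega)]
      rw [Finset.sum_congr rfl hsum, Nat.cast_sum]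
      have hcast : ∀ j ∈ Icc (a+1) e, ((m^(2*a+1-j) - m^(2*a+1-j-1) : ℕ) : ℚ)
          = (m:ℚ)^(2*a+1-j) - (m:ℚ)^(2*a+1-j-1) := by
        intro j hj
        rw [Finset.mem_Icc] at hj
        rw [Nat.cast_sub (Nat.pow_le_pow_right hm (by omega))]
        push_cast
        ring
      rw [Finset.sum_congr rfl hcast, tele_q m a e (by omega) (by omega)]
    · rw [if_neg h2, Finset.Icc_eq_empty (by omega), Finset.sum_empty, Nat.cast_zero]

lemma total_q (m a s : ℕ) (hm : 2 ≤ m) :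
    ∑ e ∈ range (2*a+2+s), (m:ℚ)^e *
        (if 2*a+1 ≤ e then (m:ℚ)^a else if a+1 ≤ e then (m:ℚ)^a - (m:ℚ)^(2*a-e) else 0)
      = (m:ℚ)^(2*a) * (((m:ℚ)^(a+s+2) - 1)/((m:ℚ)-1) - ((a:ℚ)+1)) := by
  have hm1 : (m:ℚ) - 1 ≠ 0 := by
    have : (2:ℚ) ≤ (m:ℚ) := by exact_mod_cast hm
    intro h
    nlinarith
  rw [← Nat.Ico_zero_eq_range]
  rw [← Finset.sum_Ico_consecutive _ (Nat.zero_le (a+1)) (by omega : a+1 ≤ 2*a+2+s)]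
  rw [← Finset.sum_Ico_consecutive _ (by omega : a+1 ≤ 2*a+1) (by omega : 2*a+1 ≤ 2*a+2+s)]
  have hS1 : ∑ e ∈ Ico 0 (a+1), (m:ℚ)^e *
      (if 2*a+1 ≤ e then (m:ℚ)^a else if a+1 ≤ e then (m:ℚ)^a - (m:ℚ)^(2*a-e) else 0) = 0 := by
    apply Finset.sum_eq_zero
    intro e he
    rw [Finset.mem_Ico] at he
    rw [if_neg (by omega), if_neg (by omega), mul_zero]
  have hS2 : ∑ e ∈ Ico (a+1) (2*a+1), (m:ℚ)^e *
      (if 2*a+1 ≤ e then (m:ℚ)^a else if a+1 ≤ e then (m:ℚ)^a - (m:ℚ)^(2*a-e) else 0)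
      = (∑ e ∈ Ico (a+1) (2*a+1), (m:ℚ)^(a+e)) - (a:ℚ) * (m:ℚ)^(2*a) := by
    rw [Finset.sum_congr rfl (g := fun e => (m:ℚ)^(a+e) - (m:ℚ)^(2*a)) ?_]
    · rw [Finset.sum_sub_distrib, Finset.sum_const, Nat.card_Ico]
      have : 2*a+1 - (a+1) = a := by omega
      rw [this]
      ring
    · intro e he
      rw [Finset.mem_Ico] at he
      rw [if_neg (by omega), if_pos (by omega)]
      have h1 : (m:ℚ)^e * (m:ℚ)^(2*a-e) = (m:ℚ)^(2*a) := by
        rw [← pow_add]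
        congr 1
        omega
      have h2 : (m:ℚ)^e * (m:ℚ)^a = (m:ℚ)^(a+e) := by
        rw [← pow_add]
        congr 1
        omega
      rw [mul_sub, h1, h2]
  have hS3 : ∑ e ∈ Ico (2*a+1) (2*a+2+s), (m:ℚ)^e *
      (if 2*a+1 ≤ e then (m:ℚ)^a else if a+1 ≤ e then (m:ℚ)^a - (m:ℚ)^(2*a-e) else 0)
      = ∑ e ∈ Ico (2*a+1) (2*a+2+s), (m:ℚ)^(a+e) := by
    apply Finset.sum_congr rfl
    intro e he
    rw [Finset.mem_Ico] at he
    rw [if_pos (by omega), ← pow_add]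
    congr 1
    omega
  rw [hS1, hS2, hS3, zero_add]
  have hcomb : (∑ e ∈ Ico (a+1) (2*a+1), (m:ℚ)^(a+e)) +
      (∑ e ∈ Ico (2*a+1) (2*a+2+s), (m:ℚ)^(a+e)) =
      ∑ e ∈ Ico (a+1) (2*a+2+s), (m:ℚ)^(a+e) :=
    Finset.sum_Ico_consecutive _ (by omega) (by omega)
  rw [sub_add_eq_add_sub, hcomb]
  have hgeom : ∑ e ∈ Ico (a+1) (2*a+2+s), (m:ℚ)^(a+e)
      = (m:ℚ)^(2*a+1) * (((m:ℚ)^(a+s+1) - 1)/((m:ℚ)-1)) := by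
    rw [Finset.sum_Ico_eq_sum_range]
    have hcard : 2*a+2+s - (a+1) = a+s+1 := by omega
    rw [hcard]
    have hterm : ∀ i ∈ range (a+s+1), (m:ℚ)^(a+(a+1+i)) = (m:ℚ)^(2*a+1) * (m:ℚ)^i := by
      intro i hi
      rw [← pow_add]
      congr 1
      omega
    rw [Finset.sum_congr rfl hterm, ← Finset.mul_sum, geom_sum_eq (by
      intro h
      rw [h] at hm1
      simp at hm1)]
  rw [hgeom]
  field_simp
  ring

end Aux

theorem rooted_odd_paths_large_depth (m k r : ℕ) (hm : 2 ≤ m)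
    (hk : 1 ≤ k) (hr : 2 * k - 1 ≤ r)
    {W : Type} [Fintype W] [DecidableEq W] (G : SimpleGraph W) [DecidableRel G.Adj]
    (ρ : W) (hG : IsPerfectRootedMary m r G ρ) :
    (pathCount G (2 * k - 1) : ℚ) =
      (m : ℚ) ^ (2 * k - 2) *
        (((m : ℚ) ^ (r - k + 2) - 1) / ((m : ℚ) - 1) - (k : ℚ)) := by
  classical
  obtain ⟨hT, hroot, hdeg, hle, -, hleaf⟩ := hG
  have hpt : PT G ρ m r := ⟨hT, hroot, hdeg, hle, hleaf⟩
  have hr0 : 0 < r := by omega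
  -- reduce pathCount to a sum over levels
  have h1 : pathCount G (2*k-1) = ∑ v : W, (nset G ρ v (2*k-1)).card :=
    pathCount_eq_sum_nset (ρ := ρ) hT hk rfl
  have h2 : ∀ v : W, (nset G ρ v (2*k-1)).card =
      ∑ j ∈ Icc k (min (2*k-1) (G.dist ρ v)),
        (if j = 2*k-1 then 1 else m ^ (2*k-1 - j) - m ^ (2*k-1 - j - 1)) :=
    fun v => nset_card hpt hr0 hk rfl v
  have h3 : pathCount G (2*k-1) = ∑ e ∈ range (r+1), (level G ρ e).card *
      (∑ j ∈ Icc k (min (2*k-1) e),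
        (if j = 2*k-1 then 1 else m ^ (2*k-1 - j) - m ^ (2*k-1 - j - 1))) := by
    rw [h1, Finset.sum_congr rfl (fun v _ => h2 v)]
    exact sum_levels hle (fun e => ∑ j ∈ Icc k (min (2*k-1) e),
      (if j = 2*k-1 then 1 else m ^ (2*k-1 - j) - m ^ (2*k-1 - j - 1)))
  have h4 : pathCount G (2*k-1) = ∑ e ∈ range (r+1), m ^ e *
      (∑ j ∈ Icc k (min (2*k-1) e),
        (if j = 2*k-1 then 1 else m ^ (2*k-1 - j) - m ^ (2*k-1 - j - 1))) := by
    rw [h3]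
    exact Finset.sum_congr rfl (fun e he => by
      rw [level_card hpt hr0 (by rw [Finset.mem_range] at he; omega)])
  obtain ⟨a, rfl⟩ : ∃ a, k = a + 1 := ⟨k - 1, by omega⟩
  obtain ⟨s, rfl⟩ : ∃ s, r = 2*a+1+s := ⟨r - (2*a+1), by omega⟩
  have e1 : 2*(a+1)-1 = 2*a+1 := by omega
  have e2 : 2*(a+1)-2 = 2*a := by omega
  have e3 : 2*a+1+s+1 = 2*a+2+s := by omega
  have e4 : 2*a+1+s-(a+1)+2 = a+s+2 := by omega
  rw [e1] at h4
  rw [e1, e2, e4, h4, e3]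
  rw [Nat.cast_sum]
  have h5 : ∀ e ∈ range (2*a+2+s), ((m ^ e *
      (∑ j ∈ Icc (a+1) (min (2*a+1) e),
        (if j = 2*a+1 then 1 else m ^ (2*a+1 - j) - m ^ (2*a+1 - j - 1))) : ℕ) : ℚ)
      = (m:ℚ)^e * (if 2*a+1 ≤ e then (m:ℚ)^a
          else if a+1 ≤ e then (m:ℚ)^a - (m:ℚ)^(2*a-e) else 0) := by
    intro e _
    rw [Nat.cast_mul, Nat.cast_pow, ncast_q m a (by omega) e]
  rw [Finset.sum_congr rfl h5, total_q m a s hm]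
  push_cast
  ring
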